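/- For a class whose firing space is given by a consistent normalized DBM D̃ over Te(M) ∪ {•}, an activated transition t_f is firable if and only if β̃[t_f] ≥ 0, where β̃[t_f] = min over activated t of D̃[t_f, t]. -/

import Mathlib

def dbmSol {V : Type*} (D : Option V → Option V → WithTop ℚ) : Set (V → ℚ) :=
  {ψ | ∀ x y : Option V, ((y.elim 0 ψ - x.elim 0 ψ : ℚ) : WithTop ℚ) ≤ D x y}

private lemma coe_sub_le_of_le_add {a b : ℚ} {Dv : WithTop ℚ}
    (h : (b : WithTop ℚ) ≤ (a : WithTop ℚ) + Dv) :
    ((b - a : ℚ) : WithTop ℚ) ≤ Dv := by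
  cases Dv with
  | top => exact le_top
  | coe r =>
    have : b ≤ a + r := by exact_mod_cast h
    exact_mod_cast sub_le_iff_le_add'.mpr this

/-- for a class given by a consistent normalized tight DBM, an
activated transition `t_f` is firable iff `β̃[t_f] = min_{t ∈ Ta} D̃[t_f,t] ≥ 0`. -/
theorem dbm_firable_iff_beta_nonneg {T : Type*} [Fintype T] [DecidableEq T]
    (D : Option T → Option T → WithTop ℚ) (Ta : Finset T) (tf : T)
    (htf : tf ∈ Ta)
    (hcons : (dbmSol D).Nonempty)
    (hdiag : ∀ x : Option T, D x x = 0)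
    (htri : ∀ x y z : Option T, D x z ≤ D x y + D y z)
    (htight : ∀ (x y : Option T) (q : ℚ), D x y = (q : WithTop ℚ) →
      ∃ ψ ∈ dbmSol D, (y.elim 0 ψ - x.elim 0 ψ : ℚ) = q)
    (hnn : ∀ ψ ∈ dbmSol D, ∀ t : T, 0 ≤ ψ t) :
    (∃ ψ ∈ dbmSol D, ∀ t ∈ Ta, ψ tf ≤ ψ t) ↔
      0 ≤ Ta.inf' ⟨tf, htf⟩ (fun t => D (some tf) (some t)) := by
  classical
  constructor
  · rintro ⟨ψ, hψ, hmin⟩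
    apply Finset.le_inf'
    intro t ht
    have h := hψ (some tf) (some t)
    refine le_trans ?_ h
    exact_mod_cast sub_nonneg.mpr (hmin t ht)
  · intro hβ
    have hge : ∀ t ∈ Ta, (0 : WithTop ℚ) ≤ D (some tf) (some t) :=
      fun t ht => le_trans hβ (Finset.inf'_le _ ht)
    obtain ⟨ψ0, hψ0⟩ := hcons
    have hψ0nn : ∀ t, 0 ≤ ψ0 t := hnn ψ0 hψ0
    -- Lemma A : D[tf, •] is finite
    have hfin : D (some tf) none ≠ ⊤ := by
      intro htop
      set ε : ℚ := ψ0 tf + 1 with hε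
      have hεnn : (0:ℚ) ≤ ε := by have := hψ0nn tf; simp only [hε]; linarith
      set ψ' : T → ℚ :=
        fun t => ψ0 t - if D (some tf) (some t) = ⊤ then 0 else ε with hψ'def
      have hχ : ∀ x : Option T,
          (x.elim 0 ψ' : ℚ) = x.elim 0 ψ0 - if D (some tf) x = ⊤ then 0 else ε := by
        intro x
        cases x with
        | none => simp [htop]
        | some t => rfl
      have hψ'sol : ψ' ∈ dbmSol D := by
        intro x y
        by_cases hx : D (some tf) x = ⊤ <;> by_cases hy : D (some tf) y = ⊤
        · rw [hχ, hχ, if_pos hx, if_pos hy]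
          simp only [sub_zero]
          exact hψ0 x y
        · rw [hχ, hχ, if_pos hx, if_neg hy]
          refine le_trans ?_ (hψ0 x y)
          have : (y.elim 0 ψ0 - ε - (x.elim 0 ψ0 - 0) : ℚ)
              ≤ (y.elim 0 ψ0 - x.elim 0 ψ0 : ℚ) := by linarith
          exact_mod_cast this
        · -- x ∈ W, y ∉ W : D x y must be ⊤
          have hDxy : D x y = ⊤ := by
            by_contra hxy
            obtain ⟨a, ha⟩ := WithTop.ne_top_iff_exists.mp hx
            obtain ⟨r, hr⟩ := WithTop.ne_top_iff_exists.mp hxy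
            have := htri (some tf) x y
            rw [hy, ← ha, ← hr] at this
            exact (WithTop.coe_lt_top (a + r)).not_ge (by exact_mod_cast this)
          rw [hDxy]; exact le_top
        · rw [hχ, hχ, if_neg hx, if_neg hy]
          have : (y.elim 0 ψ0 - ε - (x.elim 0 ψ0 - ε) : ℚ)
              = (y.elim 0 ψ0 - x.elim 0 ψ0 : ℚ) := by ring
          rw [this]
          exact hψ0 x y
      have := hnn ψ' hψ'sol tf
      have htfW : D (some tf) (some tf) = 0 := hdiag (some tf)
      have : (0:ℚ) ≤ ψ0 tf - ε := by
        have hne : D (some tf) (some tf) ≠ ⊤ := by rw [htfW]; exact (by simp)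
        simpa [hψ'def, hne] using this
      simp [hε] at this
      linarith
    obtain ⟨q, hq⟩ := WithTop.ne_top_iff_exists.mp hfin
    -- c is the minimal possible value of ψ tf
    set c : ℚ := -q with hc
    have hcle : ∀ t ∈ Ta, ((c : ℚ) : WithTop ℚ) ≤ D none (some t) := by
      intro t ht
      have h1 : (0 : WithTop ℚ) ≤ D (some tf) none + D none (some t) :=
        le_trans (hge t ht) (htri (some tf) none (some t))
      rw [← hq] at h1
      cases hD : D none (some t) with
      | top => exact le_top
      | coe r =>
        rw [hD] at h1
        have : (0:ℚ) ≤ q + r := by exact_mod_cast h1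
        exact_mod_cast (by linarith : c ≤ r)
    -- potential: shortest path from • in the DBM extended with edges t → tf of weight 0
    set d : Option T → WithTop ℚ :=
      fun x => min (D none x) ((c : WithTop ℚ) + D (some tf) x) with hd
    have hstep : ∀ x y : Option T, d y ≤ d x + D x y := by
      intro x y
      rcases min_cases (D none x) ((c : WithTop ℚ) + D (some tf) x) with ⟨h1, _⟩ | ⟨h1, _⟩
      · simp only [hd, h1]
        exact le_trans (min_le_left _ _) (htri none x y)
      · simp only [hd, h1]
        refine le_trans (min_le_right _ _) ?_
        rw [add_assoc]
        exact add_le_add_right (htri (some tf) x y) _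
    have hdnone : d none = 0 := by
      have : ((c : ℚ) : WithTop ℚ) + D (some tf) none = 0 := by
        rw [← hq, ← WithTop.coe_add]
        norm_num [hc]
      simp [hd, hdiag none, this]
    have hdtf : d (some tf) = ((c : ℚ) : WithTop ℚ) := by
      have h1 : ((c : ℚ) : WithTop ℚ) + D (some tf) (some tf) = ((c:ℚ) : WithTop ℚ) := by
        rw [hdiag (some tf), add_zero]
      simp only [hd, h1]
      exact min_eq_right (hcle tf htf)
    have hdTa : ∀ t ∈ Ta, ((c : ℚ) : WithTop ℚ) ≤ d (some t) := by
      intro t ht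
      refine le_min (hcle t ht) ?_
      exact le_add_of_nonneg_right (hge t ht)
    -- a large constant for the part unreachable from •
    set M : ℚ := max c ((Finset.univ : Finset (Option T × Option T)).sup'
        ⟨(none, none), Finset.mem_univ _⟩
        (fun p => (d p.2).untopD 0 - (D p.1 p.2).untopD 0 - p.1.elim 0 ψ0)) with hM
    have hMc : c ≤ M := le_max_left _ _
    have hMsup : ∀ x y : Option T,
        (d y).untopD 0 - (D x y).untopD 0 - x.elim 0 ψ0 ≤ M := by
      intro x y
      exact le_trans (Finset.le_sup'
        (fun p : Option T × Option T =>
          (d p.2).untopD 0 - (D p.1 p.2).untopD 0 - p.1.elim 0 ψ0)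
        (Finset.mem_univ (x, y))) (le_max_right _ _)
    set val : Option T → ℚ :=
      fun x => if d x = ⊤ then x.elim 0 ψ0 + M else (d x).untopD 0 with hval
    set ψ : T → ℚ := fun t => val (some t) with hψdef
    have helim : ∀ x : Option T, (x.elim 0 ψ : ℚ) = val x := by
      intro x
      cases x with
      | none => simp [hval, hdnone]
      | some t => rfl
    have hsol : ψ ∈ dbmSol D := by
      intro x y
      rw [helim, helim]
      by_cases hx : d x = ⊤ <;> by_cases hy : d y = ⊤
      · -- both unreachable: use ψ0
        simp only [hval, hx, hy, if_pos, if_true]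
        have : (y.elim 0 ψ0 + M - (x.elim 0 ψ0 + M) : ℚ)
            = (y.elim 0 ψ0 - x.elim 0 ψ0 : ℚ) := by ring
        rw [this]
        exact hψ0 x y
      · -- x unreachable, y reachable
        obtain ⟨b, hb⟩ := WithTop.ne_top_iff_exists.mp hy
        cases hDxy : D x y with
        | top => exact le_top
        | coe r =>
          simp only [hval, hx, hy, if_pos, if_neg, if_true, if_false]
          have hM' := hMsup x y
          rw [← hb, hDxy] at hM'
          simp only [WithTop.untopD_coe] at hM'
          rw [WithTop.coe_le_coe]
          rw [← hb]
          simp only [WithTop.untopD_coe]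
          linarith
      · -- x reachable, y unreachable: D x y must be ⊤
        obtain ⟨a, ha⟩ := WithTop.ne_top_iff_exists.mp hx
        have hDxy : D x y = ⊤ := by
          by_contra hxy
          obtain ⟨r, hr⟩ := WithTop.ne_top_iff_exists.mp hxy
          have := hstep x y
          rw [hy, ← ha, ← hr, ← WithTop.coe_add] at this
          exact (WithTop.coe_lt_top (a + r)).not_ge this
        rw [hDxy]; exact le_top
      · -- both reachable
        obtain ⟨a, ha⟩ := WithTop.ne_top_iff_exists.mp hx
        obtain ⟨b, hb⟩ := WithTop.ne_top_iff_exists.mp hy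
        have hs := hstep x y
        rw [← ha, ← hb] at hs
        simp only [hval, hx, hy, if_neg, if_false, ← ha, ← hb, WithTop.untopD_coe]
        exact coe_sub_le_of_le_add hs
    refine ⟨ψ, hsol, ?_⟩
    intro t ht
    have hψtf : ψ tf = c := by
      simp [hψdef, hval, hdtf]
    rw [hψtf]
    by_cases hdt : d (some t) = ⊤
    · simp only [hψdef, hval, hdt, if_pos, if_true, Option.elim]
      have := hψ0nn t
      linarith [hMc]
    · obtain ⟨b, hb⟩ := WithTop.ne_top_iff_exists.mp hdt
      have := hdTa t ht
      rw [← hb, WithTop.coe_le_coe] at this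
      simp only [hψdef, hval, hdt, if_neg, if_false, ← hb, WithTop.untopD_coe]
      exact this
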